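/- arXiv:0805.1574 — 3 statements merged into one kernel-verified Lean document; each statement's English description precedes it below -/
import Mathlib

section
/- Let q be an odd prime power, F a finite field with |F| = q, and n ≥ 1. Then the 2-rank of the general linear group GL_n(F) equals n, i.e. r_2(GL_n(F)) = n. -/
/-- A subgroup `H` is elementary abelian for the prime `p` if it is abelian and every
element `x ∈ H` satisfies `x ^ p = 1`. -/
def IsElementaryAbelian (p : ℕ) {G : Type*} [Group G] (H : Subgroup G) : Prop :=
  (∀ x ∈ H, ∀ y ∈ H, x * y = y * x) ∧ ∀ x ∈ H, x ^ p = 1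

/-- `r_p(G)`: the maximal rank (`log_p` of the order) of an elementary abelian
`p`-subgroup of `G`. -/
noncomputable def pRank (p : ℕ) (G : Type*) [Group G] : ℕ :=
  sSup {n | ∃ H : Subgroup G, IsElementaryAbelian p H ∧ Nat.card H = p ^ n}

/-- `nr_p(G)`: the maximal rank of a normal elementary abelian `p`-subgroup of `G`. -/
noncomputable def pNormalRank (p : ℕ) (G : Type*) [Group G] : ℕ :=
  sSup {n | ∃ H : Subgroup G, H.Normal ∧ IsElementaryAbelian p H ∧ Nat.card H = p ^ n}

section Aux

theorem sq_one_comm {G : Type*} [Group G] {H : Subgroup G} (hsq : ∀ x ∈ H, x ^ 2 = 1)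
    {x y : G} (hx : x ∈ H) (hy : y ∈ H) : x * y = y * x := by
  have inv_eq : ∀ a : G, a ^ 2 = 1 → a⁻¹ = a := fun a ha => by
    rw [← mul_one a⁻¹, ← ha, pow_two, ← mul_assoc, inv_mul_cancel, one_mul]
  have e1 : (x * y)⁻¹ = x * y := inv_eq _ (hsq _ (H.mul_mem hx hy))
  rw [mul_inv_rev, inv_eq x (hsq x hx), inv_eq y (hsq y hy)] at e1
  exact e1.symm

variable {F : Type*} [Field F] {V : Type*} [AddCommGroup V] [Module F V]

/-- Restriction of a subgroup of linear automorphisms to an invariant submodule,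
as a monoid hom into the automorphisms of the submodule. -/
def resHom (H : Subgroup (V →ₗ[F] V)ˣ) (W : Submodule F V)
    (hW : ∀ g : (V →ₗ[F] V)ˣ, g ∈ H → ∀ v ∈ W, (g : V →ₗ[F] V) v ∈ W) :
    ↥H →* (↥W →ₗ[F] ↥W)ˣ where
  toFun g :=
    { val := LinearMap.restrict (g.1 : V →ₗ[F] V) (fun v hv => hW g.1 g.2 v hv)
      inv := LinearMap.restrict ((g.1⁻¹ : (V →ₗ[F] V)ˣ) : V →ₗ[F] V)
        (fun v hv => hW g.1⁻¹ (H.inv_mem g.2) v hv)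
      val_inv := by
        refine LinearMap.ext fun v => Subtype.ext ?_
        simp only [Module.End.mul_apply, LinearMap.restrict_apply, Module.End.one_apply]
        have : ((g.1 : V →ₗ[F] V) * ((g.1⁻¹ : (V →ₗ[F] V)ˣ) : V →ₗ[F] V)) = 1 := by
          rw [← Units.val_mul, mul_inv_cancel, Units.val_one]
        exact DFunLike.congr_fun this (v : V)
      inv_val := by
        refine LinearMap.ext fun v => Subtype.ext ?_
        simp only [Module.End.mul_apply, LinearMap.restrict_apply, Module.End.one_apply]
        have : (((g.1⁻¹ : (V →ₗ[F] V)ˣ) : V →ₗ[F] V) * (g.1 : V →ₗ[F] V)) = 1 := by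
          rw [← Units.val_mul, inv_mul_cancel, Units.val_one]
        exact DFunLike.congr_fun this (v : V) }
  map_one' := by
    refine Units.ext (LinearMap.ext fun v => Subtype.ext ?_)
    simp [LinearMap.restrict_apply]
  map_mul' g h := by
    refine Units.ext (LinearMap.ext fun v => Subtype.ext ?_)
    simp [LinearMap.restrict_apply]

/-- Key upper bound: an elementary abelian `2`-subgroup of the linear automorphisms of an
`n`-dimensional space over a field of odd characteristic has order at most `2 ^ n`. -/
theorem key {F : Type*} [Field F] [Finite F] (h2 : (2 : F) ≠ 0) :
    ∀ n : ℕ, ∀ (V : Type u) [AddCommGroup V] [Module F V] [FiniteDimensional F V],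
    Module.finrank F V = n →
    ∀ H : Subgroup (V →ₗ[F] V)ˣ, (∀ x ∈ H, x ^ 2 = 1) → Nat.card ↥H ≤ 2 ^ n := by
  intro n
  induction n using Nat.strong_induction_on with
  | _ n IH =>
  intro V _ _ _ hrank H hsq
  haveI : Finite V := Module.finite_iff_finite.mp ‹_›
  haveI : Finite (V →ₗ[F] V) := Finite.of_injective _ DFunLike.coe_injective
  rcases Nat.eq_zero_or_pos n with hn0 | hnpos
  · subst hn0
    haveI : Subsingleton V := Module.finrank_zero_iff.mp hrank
    haveI : Subsingleton (V →ₗ[F] V) := ⟨fun a b => LinearMap.ext fun v => Subsingleton.elim _ _⟩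
    haveI : Subsingleton (V →ₗ[F] V)ˣ := ⟨fun a b => Units.ext (Subsingleton.elim _ _)⟩
    haveI : Unique ↥H := ⟨⟨1⟩, fun a => Subtype.ext (Subsingleton.elim _ _)⟩
    rw [Nat.card_unique]
    exact Nat.one_le_two_pow
  by_cases hall : ∀ g ∈ H, g = (1 : (V →ₗ[F] V)ˣ) ∨ g = (-1 : (V →ₗ[F] V)ˣ)
  · have hsub : (H : Set (V →ₗ[F] V)ˣ) ⊆ {1, -1} := by
      intro g hg; rcases hall g hg with h | h <;> simp [h]
    calc Nat.card ↥H = (H : Set (V →ₗ[F] V)ˣ).ncard := (Nat.card_coe_set_eq _).symm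
      _ ≤ ({1, -1} : Set (V →ₗ[F] V)ˣ).ncard := Set.ncard_le_ncard hsub (Set.toFinite _)
      _ ≤ 2 := by
          refine le_trans (Set.ncard_insert_le _ _) ?_
          simp [Set.ncard_singleton]
      _ ≤ 2 ^ n := by
          calc (2:ℕ) = 2 ^ 1 := rfl
          _ ≤ 2 ^ n := Nat.pow_le_pow_right (by norm_num) hnpos
  · push_neg at hall
    obtain ⟨u, huH, hu1, hum1⟩ := hall
    set f : V →ₗ[F] V := (u : V →ₗ[F] V) with hf
    have hff : ∀ v : V, f (f v) = v := by
      intro v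
      have : (u : V →ₗ[F] V) * (u : V →ₗ[F] V) = 1 := by
        rw [← Units.val_mul, ← pow_two, hsq u huH, Units.val_one]
      exact DFunLike.congr_fun this v
    set Kp : Submodule F V := LinearMap.ker (f - 1) with hKp
    set Km : Submodule F V := LinearMap.ker (f + 1) with hKm
    have memp : ∀ v : V, v ∈ Kp ↔ f v = v := by
      intro v; rw [hKp, LinearMap.mem_ker, LinearMap.sub_apply, Module.End.one_apply,
        sub_eq_zero]
    have memm : ∀ v : V, v ∈ Km ↔ f v = -v := by
      intro v; rw [hKm, LinearMap.mem_ker, LinearMap.add_apply, Module.End.one_apply,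
        add_eq_zero_iff_eq_neg]
    have hcompl : IsCompl Kp Km := by
      constructor
      · rw [disjoint_iff_inf_le]
        intro v hv
        have h1 := (memp v).mp hv.1
        have h2' := (memm v).mp hv.2
        have hveq : v = -v := h1.symm.trans h2'
        have : (2 : F) • v = 0 := by
          rw [two_smul]; nth_rewrite 2 [hveq]; exact add_neg_cancel v
        simpa [smul_eq_zero, h2] using this
      · rw [codisjoint_iff_le_sup]
        intro v _
        have hv : v = (2:F)⁻¹ • (v + f v) + (2:F)⁻¹ • (v - f v) := by
          rw [← smul_add]
          have : v + f v + (v - f v) = (2:F) • v := by rw [two_smul]; abel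
          rw [this, smul_smul, inv_mul_cancel₀ h2, one_smul]
        rw [hv]
        refine Submodule.add_mem_sup ?_ ?_
        · rw [memp]; rw [map_smul, map_add, hff]; rw [add_comm]
        · rw [memm]; rw [map_smul, map_sub, hff, ← smul_neg]; congr 1; abel
    have hd : Module.finrank F ↥Kp + Module.finrank F ↥Km = n := by
      rw [← hrank]; exact Submodule.finrank_add_eq_of_isCompl hcompl
    have hinvp : ∀ g : (V →ₗ[F] V)ˣ, g ∈ H → ∀ v ∈ Kp, (g : V →ₗ[F] V) v ∈ Kp := by
      intro g hg v hv
      rw [memp] at hv ⊢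
      have hcg : g * u = u * g := sq_one_comm hsq hg huH
      have hmul : (g : V →ₗ[F] V) * f = f * (g : V →ₗ[F] V) := by
        simpa [Units.val_mul, hf] using congrArg Units.val hcg
      have hpt := DFunLike.congr_fun hmul v
      simp only [Module.End.mul_apply] at hpt
      rw [← hpt, hv]
    have hinvm : ∀ g : (V →ₗ[F] V)ˣ, g ∈ H → ∀ v ∈ Km, (g : V →ₗ[F] V) v ∈ Km := by
      intro g hg v hv
      rw [memm] at hv ⊢
      have hcg : g * u = u * g := sq_one_comm hsq hg huH
      have hmul : (g : V →ₗ[F] V) * f = f * (g : V →ₗ[F] V) := by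
        simpa [Units.val_mul, hf] using congrArg Units.val hcg
      have hpt := DFunLike.congr_fun hmul v
      simp only [Module.End.mul_apply] at hpt
      rw [← hpt, hv, map_neg]
    have hne_p : Kp ≠ ⊤ := by
      intro htop
      apply hu1
      refine Units.ext (LinearMap.ext fun v => ?_)
      have hv : v ∈ Kp := htop ▸ Submodule.mem_top
      simpa [Units.val_one, hf] using (memp v).mp hv
    have hne_m : Km ≠ ⊤ := by
      intro htop
      apply hum1
      refine Units.ext (LinearMap.ext fun v => ?_)
      have hv : v ∈ Km := htop ▸ Submodule.mem_top
      have := (memm v).mp hv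
      simpa [Units.val_neg, Units.val_one, hf] using this
    have hlt_p : Module.finrank F ↥Kp < n :=
      hrank ▸ Submodule.finrank_lt hne_p
    have hlt_m : Module.finrank F ↥Km < n :=
      hrank ▸ Submodule.finrank_lt hne_m
    set rp := resHom H Kp hinvp with hrp
    set rm := resHom H Km hinvm with hrm
    have hsqp : ∀ x ∈ rp.range, x ^ 2 = 1 := by
      rintro x ⟨g, rfl⟩
      rw [← map_pow]
      have hg2 : g ^ 2 = 1 := Subtype.ext (by simpa using hsq g.1 g.2)
      rw [hg2, map_one]
    have hsqm : ∀ x ∈ rm.range, x ^ 2 = 1 := by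
      rintro x ⟨g, rfl⟩
      rw [← map_pow]
      have hg2 : g ^ 2 = 1 := Subtype.ext (by simpa using hsq g.1 g.2)
      rw [hg2, map_one]
    have hbp : Nat.card ↥rp.range ≤ 2 ^ Module.finrank F ↥Kp :=
      IH _ hlt_p ↥Kp rfl rp.range hsqp
    have hbm : Nat.card ↥rm.range ≤ 2 ^ Module.finrank F ↥Km :=
      IH _ hlt_m ↥Km rfl rm.range hsqm
    haveI : Finite (↥Kp →ₗ[F] ↥Kp) := Finite.of_injective _ DFunLike.coe_injective
    haveI : Finite (↥Km →ₗ[F] ↥Km) := Finite.of_injective _ DFunLike.coe_injective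
    set ψ : ↥H → ↥rp.range × ↥rm.range :=
      fun g => (⟨rp g, ⟨g, rfl⟩⟩, ⟨rm g, ⟨g, rfl⟩⟩) with hψ
    have hinj : Function.Injective ψ := by
      intro a b hab
      have h1 : rp a = rp b := Subtype.ext_iff.mp (congrArg Prod.fst hab)
      have h2' : rm a = rm b := Subtype.ext_iff.mp (congrArg Prod.snd hab)
      have hap : ∀ v ∈ Kp, (a.1 : V →ₗ[F] V) v = (b.1 : V →ₗ[F] V) v := by
        intro v hv
        exact congrArg (fun z : (↥Kp →ₗ[F] ↥Kp)ˣ => ((z : ↥Kp →ₗ[F] ↥Kp) ⟨v, hv⟩ : V)) h1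
      have ham : ∀ v ∈ Km, (a.1 : V →ₗ[F] V) v = (b.1 : V →ₗ[F] V) v := by
        intro v hv
        exact congrArg (fun z : (↥Km →ₗ[F] ↥Km)ˣ => ((z : ↥Km →ₗ[F] ↥Km) ⟨v, hv⟩ : V)) h2'
      have hall' : ∀ v : V, (a.1 : V →ₗ[F] V) v = (b.1 : V →ₗ[F] V) v := by
        intro v
        have hv : v ∈ Kp ⊔ Km := by
          rw [codisjoint_iff.mp hcompl.codisjoint]; exact Submodule.mem_top
        obtain ⟨x, hx, y, hy, rfl⟩ := Submodule.mem_sup.mp hv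
        rw [map_add, map_add, hap x hx, ham y hy]
      exact Subtype.ext (Units.ext (LinearMap.ext hall'))
    calc Nat.card ↥H ≤ Nat.card (↥rp.range × ↥rm.range) :=
          Nat.card_le_card_of_injective ψ hinj
      _ = Nat.card ↥rp.range * Nat.card ↥rm.range := Nat.card_prod _ _
      _ ≤ 2 ^ Module.finrank F ↥Kp * 2 ^ Module.finrank F ↥Km := Nat.mul_le_mul hbp hbm
      _ = 2 ^ n := by rw [← pow_add, hd]

theorem two_ne_zero_of_odd_card (F : Type*) [Field F] [Fintype F]
    (hq : Odd (Fintype.card F)) : (2 : F) ≠ 0 := by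
  intro h
  haveI := ringChar.charP F
  have hdvd : ringChar F ∣ 2 := (CharP.cast_eq_zero_iff F (ringChar F) 2).mp (by exact_mod_cast h)
  have hp : (ringChar F).Prime := CharP.char_is_prime F (ringChar F)
  have hchar : ringChar F = 2 := (Nat.prime_dvd_prime_iff_eq hp Nat.prime_two).mp hdvd
  have heven := FiniteField.even_card_iff_char_two.mp hchar
  obtain ⟨k, hk⟩ := hq
  omega

/-- The diagonal ±1 matrices as a hom from `(Fin n → ℤˣ)`. -/
def diagHom (n : ℕ) (F : Type*) [Field F] :
    (Fin n → ℤˣ) →* Matrix.GeneralLinearGroup (Fin n) F where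
  toFun η :=
    { val := Matrix.diagonal fun i => ((η i : ℤ) : F)
      inv := Matrix.diagonal fun i => ((η i : ℤ) : F)
      val_inv := by
        rw [Matrix.diagonal_mul_diagonal]
        convert Matrix.diagonal_one
        rw [← Int.cast_mul, ← Units.val_mul]
        norm_num
      inv_val := by
        rw [Matrix.diagonal_mul_diagonal]
        convert Matrix.diagonal_one
        rw [← Int.cast_mul, ← Units.val_mul]
        norm_num }
  map_one' := by
    refine Units.ext ?_
    simp
  map_mul' η θ := by
    refine Units.ext ?_
    simp [Matrix.diagonal_mul_diagonal]

theorem diagHom_injective (n : ℕ) (F : Type*) [Field F] (h2 : (2 : F) ≠ 0) :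
    Function.Injective (diagHom n F) := by
  intro η θ hηθ
  funext i
  have := congrArg (fun g : Matrix.GeneralLinearGroup (Fin n) F =>
    (g : Matrix (Fin n) (Fin n) F) i i) hηθ
  simp only [diagHom, MonoidHom.coe_mk, OneHom.coe_mk, Matrix.diagonal_apply_eq] at this
  rcases Int.units_eq_one_or (η i) with h | h <;> rcases Int.units_eq_one_or (θ i) with h' | h' <;>
    simp [h, h'] at this ⊢
  · exact absurd (by linear_combination this) h2
  · exact absurd (by linear_combination -this) h2

theorem map_EA {p : ℕ} {G G' : Type*} [Group G] [Group G'] (φ : G →* G') (H : Subgroup G)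
    (h : IsElementaryAbelian p H) : IsElementaryAbelian p (H.map φ) := by
  constructor
  · rintro x ⟨a, ha, rfl⟩ y ⟨b, hb, rfl⟩
    rw [← map_mul, ← map_mul, h.1 a ha b hb]
  · rintro x ⟨a, ha, rfl⟩
    rw [← map_pow, h.2 a ha, map_one]

theorem card_map_of_injective {G G' : Type*} [Group G] [Group G'] (φ : G →* G')
    (hφ : Function.Injective φ) (H : Subgroup G) : Nat.card ↥(H.map φ) = Nat.card ↥H :=
  Nat.card_congr (Subgroup.equivMapOfInjective H φ hφ).toEquiv.symm

end Aux

/-- The 2-rank of `GL_n(F)` over a finite field `F` of odd order `q` equals `n`: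
the 2-rank of every Sylow 2-subgroup of `GL_n(F)` is `n`. -/
theorem rank_GL (q n : ℕ) (hn : 1 ≤ n) (F : Type*) [Field F] [Fintype F]
    (hc : Fintype.card F = q) (hq : Odd q) (hpp : IsPrimePow q)
    (P : Sylow 2 (Matrix.GeneralLinearGroup (Fin n) F)) :
    pRank 2 ↥(P : Subgroup (Matrix.GeneralLinearGroup (Fin n) F)) = n := by
  classical
  set G := Matrix.GeneralLinearGroup (Fin n) F with hG
  have h2 : (2 : F) ≠ 0 := two_ne_zero_of_odd_card F (hc ▸ hq)
  -- upper bound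
  have hub : ∀ m ∈ {m | ∃ H : Subgroup ↥(P : Subgroup G), IsElementaryAbelian 2 H ∧
      Nat.card ↥H = 2 ^ m}, m ≤ n := by
    rintro m ⟨H, hEA, hcard⟩
    have hsub_inj : Function.Injective (P : Subgroup G).subtype := Subtype.val_injective
    set H1 := H.map (P : Subgroup G).subtype with hH1
    have hEA1 : IsElementaryAbelian 2 H1 := map_EA _ _ hEA
    have hcard1 : Nat.card ↥H1 = 2 ^ m := by
      rw [card_map_of_injective _ hsub_inj, hcard]
    set e : G ≃* ((Fin n → F) →ₗ[F] (Fin n → F))ˣ := Matrix.GeneralLinearGroup.toLin with he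
    set H2 := H1.map e.toMonoidHom with hH2
    have hEA2 : IsElementaryAbelian 2 H2 := map_EA _ _ hEA1
    have hcard2 : Nat.card ↥H2 = 2 ^ m :=
      (card_map_of_injective e.toMonoidHom e.injective H1).trans hcard1
    have hrk : Module.finrank F (Fin n → F) = n := by
      simp [Module.finrank_pi]
    have := key h2 n (Fin n → F) hrk H2 hEA2.2
    rw [hcard2] at this
    exact (Nat.pow_le_pow_iff_right (by norm_num)).mp this
  -- lower bound: n is attained
  have hmem : n ∈ {m | ∃ H : Subgroup ↥(P : Subgroup G), IsElementaryAbelian 2 H ∧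
      Nat.card ↥H = 2 ^ m} := by
    have hd_inj := diagHom_injective n F h2
    set D := (diagHom n F).range with hD
    have hsqD : ∀ x ∈ D, x ^ 2 = 1 := by
      rintro x ⟨η, rfl⟩
      rw [← map_pow]
      have : η ^ 2 = 1 := by
        funext i
        have : (η ^ 2) i = (η i) ^ 2 := rfl
        rw [this]
        rcases Int.units_eq_one_or (η i) with h | h <;> simp [h]
      rw [this, map_one]
    have hcommD : ∀ x ∈ D, ∀ y ∈ D, x * y = y * x := fun x hx y hy =>
      sq_one_comm hsqD hx hy
    have hpD : IsPGroup 2 D := by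
      intro g
      exact ⟨1, Subtype.ext (by simpa using hsqD g.1 g.2)⟩
    obtain ⟨Q, hDQ⟩ := hpD.exists_le_sylow
    haveI : Finite G := inferInstance
    obtain ⟨g, hg⟩ := MulAction.exists_smul_eq G Q P
    set D1 := D.map (MulAut.conj g).toMonoidHom with hD1
    have hD1P : D1 ≤ (P : Subgroup G) := by
      rintro x ⟨d, hd, rfl⟩
      have hmem := Subgroup.smul_mem_pointwise_smul d (MulAut.conj g) (Q : Subgroup G) (hDQ hd)
      rw [← Sylow.coe_subgroup_smul, hg] at hmem
      simpa using hmem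
    have hEA1 : IsElementaryAbelian 2 D1 := map_EA _ _ ⟨hcommD, hsqD⟩
    have hcardD : Nat.card ↥D = 2 ^ n := by
      have h1 : Nat.card ↥D = Nat.card (Fin n → ℤˣ) :=
        Nat.card_congr (MonoidHom.ofInjective hd_inj).toEquiv.symm
      rw [h1, Nat.card_fun]
      simp [Nat.card_eq_fintype_card, Fintype.card_units_int]
    have hcard1 : Nat.card ↥D1 = 2 ^ n := by
      rw [card_map_of_injective _ (MulAut.conj g).injective, hcardD]
    refine ⟨D1.subgroupOf (P : Subgroup G), ⟨?_, ?_⟩, ?_⟩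
    · intro x hx y hy
      refine Subtype.ext ?_
      exact hEA1.1 _ hx _ hy
    · intro x hx
      refine Subtype.ext ?_
      simpa using hEA1.2 _ hx
    · rw [Nat.card_congr (Subgroup.subgroupOfEquivOfLe hD1P).toEquiv, hcard1]
  unfold pRank
  exact le_antisymm (csSup_le ⟨n, hmem⟩ hub) (le_csSup ⟨n, hub⟩ hmem)
end

section
/- Let q be an odd prime power, F a finite field with |F| = q, and n ≥ 1. Then the 2-rank of the special linear group SL_{2n}(F) equals 2n − 1, i.e. r_2(SL_{2n}(F)) = 2n − 1. -/
open Module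

private lemma invol_eigen {F V : Type*} [Field F] [AddCommGroup V] [Module F V]
    (htwo : (2:F) ≠ 0) {f : Module.End F V} (hf : f * f = 1) {μ : F} {x : V}
    (hx : x ∈ f.maxGenEigenspace μ) : f x = μ • x := by
  rw [Module.End.mem_maxGenEigenspace] at hx
  obtain ⟨k, hk⟩ := hx
  induction k generalizing x with
  | zero =>
    simp only [pow_zero, Module.End.one_apply] at hk
    rw [hk, map_zero, smul_zero]
  | succ k ih =>
    rw [pow_succ, Module.End.mul_apply] at hk
    have h1 : f ((f - μ • (1 : Module.End F V)) x) = μ • ((f - μ • (1 : Module.End F V)) x) :=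
      ih hk
    have hffx : f (f x) = x := by
      have := LinearMap.congr_fun hf x
      simpa [Module.End.mul_apply] using this
    simp only [LinearMap.sub_apply, LinearMap.smul_apply, Module.End.one_apply, map_sub,
      map_smul, hffx, smul_sub] at h1
    -- h1 : x - μ • f x = μ • f x - μ • μ • x
    have hA : (1 + μ * μ) • x = (2 * μ) • f x := by
      linear_combination (norm := module) h1
    have hB : (1 + μ * μ) • f x = (2 * μ) • x := by
      have := congrArg f hA
      simpa [map_smul, hffx] using this
    by_cases hμ : μ * μ = 1
    · rw [hμ] at hB
      have h2 : (2:F) • f x = (2:F) • (μ • x) := by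
        rw [smul_smul]
        rw [← hB]; norm_num [mul_comm]
      exact smul_right_injective V htwo h2
    · have hx0 : ((1 - μ*μ) * (1 - μ*μ)) • x = 0 := by
        have e1 : ((1 + μ*μ) * (1 + μ*μ)) • x = ((2*μ) * (2*μ)) • x := by
          rw [← smul_smul, hA, smul_smul, mul_comm, ← smul_smul, hB, smul_smul]
        have e2 : (((1 + μ*μ) * (1 + μ*μ)) - ((2*μ) * (2*μ))) • x = 0 := by
          rw [sub_smul, e1, sub_self]
        convert e2 using 2
        ring
      have hne : (1 - μ*μ) * (1 - μ*μ) ≠ 0 :=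
        mul_ne_zero (sub_ne_zero.mpr (Ne.symm hμ)) (sub_ne_zero.mpr (Ne.symm hμ))
      have hx' : x = 0 := (smul_eq_zero.mp hx0).resolve_left hne
      rw [hx', map_zero, smul_zero]

private lemma invol_iSup {F V : Type*} [Field F] [AddCommGroup V] [Module F V]
    (htwo : (2:F) ≠ 0) {f : Module.End F V} (hf : f * f = 1) :
    ⨆ μ, f.maxGenEigenspace μ = ⊤ := by
  rw [eq_top_iff]
  intro x _
  have hffx : f (f x) = x := by
    have := LinearMap.congr_fun hf x
    simpa [Module.End.mul_apply] using this
  have hmem : ∀ (μ : F) (y : V), f y = μ • y → y ∈ ⨆ μ, f.maxGenEigenspace μ := by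
    intro μ y hy
    refine Submodule.mem_iSup_of_mem μ ?_
    have : y ∈ f.eigenspace μ := Module.End.mem_eigenspace_iff.mpr hy
    exact ((f.genEigenspace μ).monotone le_top : f.eigenspace μ ≤ f.maxGenEigenspace μ) this
  have ha : f ((2:F)⁻¹ • (x + f x)) = (1:F) • ((2:F)⁻¹ • (x + f x)) := by
    rw [one_smul, map_smul, map_add, hffx, add_comm]
  have hb : f ((2:F)⁻¹ • (x - f x)) = (-1:F) • ((2:F)⁻¹ • (x - f x)) := by
    rw [map_smul, map_sub, hffx, neg_smul, one_smul, smul_sub, smul_sub, neg_sub]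
  have hx : (2:F)⁻¹ • (x + f x) + (2:F)⁻¹ • (x - f x) = x := by
    rw [← smul_add]
    have : (x + f x) + (x - f x) = (2:F) • x := by
      rw [two_smul]; abel
    rw [this, smul_smul, inv_mul_cancel₀ htwo, one_smul]
  rw [← hx]
  exact Submodule.add_mem _ (hmem 1 _ ha) (hmem (-1) _ hb)

open Module

set_option maxHeartbeats 1000000 in
set_option synthInstance.maxHeartbeats 200000 in
private lemma card_le_pow {F : Type*} [Field F] (htwo : (2:F) ≠ 0) {m : ℕ} (hm : 1 ≤ m)
    (H : Subgroup (Matrix.SpecialLinearGroup (Fin m) F))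
    (hcomm : ∀ x ∈ H, ∀ y ∈ H, x*y = y*x) (hsq : ∀ x ∈ H, x^2 = 1) :
    Nat.card H ≤ 2 ^ (m-1) := by
  classical
  have hone : (1:F) ≠ -1 := by
    intro h
    apply htwo
    rw [← one_add_one_eq_two]
    nth_rewrite 2 [h]
    simp
  set V := (Fin m → F) with hV
  let f : ↥H → Module.End F V := fun h => Matrix.toLin' (h.1.1)
  have hfmul : ∀ a b : ↥H, f (a*b) = f a * f b := by
    intro a b
    show Matrix.toLin' ((a*b : ↥H) : Matrix.SpecialLinearGroup (Fin m) F).1 = _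
    rw [Subgroup.coe_mul, Matrix.SpecialLinearGroup.coe_mul, Matrix.toLin'_mul]
    rfl
  have hf1 : ∀ a : ↥H, f a * f a = 1 := by
    intro a
    rw [← hfmul]
    have h2 : ((a*a : ↥H) : Matrix.SpecialLinearGroup (Fin m) F) = 1 := by
      rw [Subgroup.coe_mul, ← sq]
      exact hsq a.1 a.2
    show Matrix.toLin' ((a*a : ↥H) : Matrix.SpecialLinearGroup (Fin m) F).1 = 1
    rw [h2, Matrix.SpecialLinearGroup.coe_one, Matrix.toLin'_one]
    rfl
  have hcom : ∀ a b : ↥H, Commute (f a) (f b) := by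
    intro a b
    show f a * f b = f b * f a
    rw [← hfmul, ← hfmul]
    congr 1
    exact Subtype.ext (hcomm a.1 a.2 b.1 b.2)
  have hTop :=
    Module.End.iSup_iInf_maxGenEigenspace_eq_top_of_iSup_maxGenEigenspace_eq_top_of_commute f
      (fun a b _ => hcom a b) (fun a => invol_iSup htwo (hf1 a))
  have hInd := Module.End.independent_iInf_maxGenEigenspace_of_forall_mapsTo f
      (fun i j φ => Module.End.mapsTo_maxGenEigenspace_of_comm (hcom j i) φ)
  set W : (↥H → F) → Submodule F V := fun χ => ⨅ h, (f h).maxGenEigenspace (χ h) with hWdef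
  have hInternal : DirectSum.IsInternal W :=
    (DirectSum.isInternal_submodule_iff_iSupIndep_and_iSup_eq_top W).mpr ⟨hInd, hTop⟩
  let bas : ∀ χ : ↥H → F, Basis _ F (W χ) := fun χ => Basis.ofVectorSpace F (W χ)
  haveI : Fintype (Σ χ : ↥H → F, Module.Basis.ofVectorSpaceIndex F (W χ)) :=
    FiniteDimensional.fintypeBasisIndex (hInternal.collectedBasis bas)
  set I := (Σ χ : ↥H → F, Module.Basis.ofVectorSpaceIndex F (W χ)) with hIdef
  obtain ⟨B, hBmem⟩ : ∃ B : Basis I F V, ∀ i : I, B i ∈ W i.1 :=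
    ⟨hInternal.collectedBasis bas, fun i => hInternal.collectedBasis_mem bas i⟩
  have hcardI : Fintype.card I = m := by
    rw [← Module.finrank_eq_card_basis B]
    exact Module.finrank_fin_fun F
  have heig : ∀ (h : ↥H) (i : I), f h (B i) = i.1 h • B i := by
    intro h i
    refine invol_eigen htwo (hf1 h) ?_
    have hWm : B i ∈ W i.1 := hBmem i
    simp only [hWdef] at hWm
    exact (iInf_le (fun h' => (f h').maxGenEigenspace (i.1 h')) h) hWm
  let Φ : ↥H → (I → F) := fun h i => i.1 h
  have hinj : Function.Injective Φ := by
    intro a b hab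
    have hfab : f a = f b := by
      apply B.ext
      intro i
      rw [heig, heig]
      exact congrArg (fun c => c • B i) (congrFun hab i)
    have : (a.1 : Matrix (Fin m) (Fin m) F) = b.1.1 :=
      Matrix.toLin'.injective hfab
    exact Subtype.ext (Subtype.ext this)
  have hpm : ∀ (h : ↥H) (i : I), i.1 h = 1 ∨ i.1 h = -1 := by
    intro h i
    rw [← mul_self_eq_one_iff]
    have h2 : f h (f h (B i)) = B i := by
      have := LinearMap.congr_fun (hf1 h) (B i)
      simpa [Module.End.mul_apply] using this
    rw [heig, map_smul, heig, smul_smul] at h2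
    by_contra hne
    have : (i.1 h * i.1 h - 1) • B i = 0 := by
      rw [sub_smul, one_smul, h2, sub_self]
    rcases smul_eq_zero.mp this with h' | h'
    · exact hne (sub_eq_zero.mp h')
    · exact B.ne_zero i h'
  have hdet : ∀ h : ↥H, ∏ i : I, i.1 h = 1 := by
    intro h
    have h1 : LinearMap.toMatrix B B (f h) = Matrix.diagonal (fun i : I => i.1 h) := by
      ext i j
      rw [LinearMap.toMatrix_apply, heig, map_smul, Finsupp.smul_apply, B.repr_self_apply]
      rw [Matrix.diagonal]
      by_cases hij : i = j
      · subst hij; simp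
      · simp [hij, Ne.symm hij]
    have h2 : LinearMap.det (f h) = ∏ i : I, i.1 h := by
      rw [← LinearMap.det_toMatrix B, h1, Matrix.det_diagonal]
    have h3 : LinearMap.det (f h) = 1 := by
      show LinearMap.det (Matrix.toLin' h.1.1) = 1
      rw [LinearMap.det_toLin']
      exact h.1.2
    rw [← h2, h3]
  -- now the counting
  haveI : Nonempty I := by
    rw [← Fintype.card_pos_iff, hcardI]; omega
  haveI hFinI : Finite I := Finite.of_fintype _
  obtain i₀ : I := Classical.arbitrary I
  haveI hFinSub : Fintype {i : I // i ≠ i₀} := Fintype.ofFinite _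
  haveI : Finite {i : I // i ≠ i₀} := Finite.of_fintype _
  haveI : Finite ({i : I // i ≠ i₀} → Bool) := Finite.of_fintype _
  let Ψ : ↥H → ({i : I // i ≠ i₀} → Bool) := fun h i => decide (i.1.1 h = 1)
  have hoff : ∀ (a b : ↥H), Ψ a = Ψ b → ∀ i : I, i ≠ i₀ → i.1 a = i.1 b := by
    intro a b hab i hi
    have := congrFun hab ⟨i, hi⟩
    simp only [Ψ, decide_eq_decide] at this
    rcases hpm a i with h1 | h1 <;> rcases hpm b i with h2 | h2
    · rw [h1, h2]
    · exact absurd ((this.mp h1).symm.trans h2) hone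
    · exact absurd ((this.mpr h2).symm.trans h1) hone
    · rw [h1, h2]
  have hΨinj : Function.Injective Ψ := by
    intro a b hab
    apply hinj
    funext i
    by_cases hi : i = i₀
    · subst hi
      have pa := hdet a
      have pb := hdet b
      rw [← Finset.mul_prod_erase Finset.univ _ (Finset.mem_univ i)] at pa pb
      have hrest : ∏ j ∈ Finset.univ.erase i, j.1 a = ∏ j ∈ Finset.univ.erase i, j.1 b :=
        Finset.prod_congr rfl fun j hj => hoff a b hab j (Finset.mem_erase.mp hj).1
      have : i.1 a * ∏ j ∈ Finset.univ.erase i, j.1 a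
           = i.1 b * ∏ j ∈ Finset.univ.erase i, j.1 b := by rw [pa, pb]
      rw [hrest] at this
      have hne : ∏ j ∈ Finset.univ.erase i, j.1 b ≠ 0 := by
        apply Finset.prod_ne_zero_iff.mpr
        intro j _
        rcases hpm b j with h' | h' <;> rw [h']
        · exact one_ne_zero
        · exact neg_ne_zero.mpr one_ne_zero
      exact mul_right_cancel₀ hne this
    · exact hoff a b hab i hi
  calc Nat.card ↥H ≤ Nat.card ({i : I // i ≠ i₀} → Bool) :=
        Nat.card_le_card_of_injective Ψ hΨinj
    _ = 2 ^ (m - 1) := by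
        rw [Nat.card_fun, Nat.card_eq_fintype_card, Nat.card_eq_fintype_card, Fintype.card_bool]
        congr 1
        have : Fintype.card {i : I // i ≠ i₀} = Fintype.card I - 1 := by
          simp only [ne_eq]
          rw [Fintype.card_subtype_compl, Fintype.card_subtype_eq]
        rw [this, hcardI]


private lemma exists_diag {F : Type*} [Field F] (htwo : (2:F) ≠ 0) {m : ℕ} (hm : 1 ≤ m) :
    ∃ D : Subgroup (Matrix.SpecialLinearGroup (Fin m) F),
      (∀ x ∈ D, ∀ y ∈ D, x*y = y*x) ∧ (∀ x ∈ D, x^2 = 1) ∧ Nat.card D = 2^(m-1) := by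
  classical
  have hone : (1:F) ≠ -1 := by
    intro h
    apply htwo
    rw [← one_add_one_eq_two]
    nth_rewrite 2 [h]
    simp
  let π : (Fin m → ℤˣ) →* ℤˣ := MonoidHom.mk' (fun v => ∏ i, v i)
    (fun a b => by simp [Finset.prod_mul_distrib])
  have hπ : ∀ v, π v = ∏ i, v i := fun v => rfl
  set K := π.ker with hK
  have hsurj : Function.Surjective π := by
    intro u
    rcases Int.units_eq_one_or u with rfl | rfl
    · exact ⟨1, map_one π⟩
    · refine ⟨fun i => if i = ⟨0, hm⟩ then -1 else 1, ?_⟩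
      rw [hπ, Finset.prod_ite_eq' Finset.univ (⟨0, hm⟩ : Fin m) (fun _ => (-1 : ℤˣ))]
      simp
  have hcardPi : Nat.card (Fin m → ℤˣ) = 2 ^ m := by
    rw [Nat.card_pi]
    simp [Nat.card_eq_fintype_card, Fintype.card_units_int]
  have hcardK : Nat.card K = 2 ^ (m - 1) := by
    have h1 := Subgroup.card_eq_card_quotient_mul_card_subgroup K
    have h2 : Nat.card ((Fin m → ℤˣ) ⧸ K) = 2 := by
      rw [Nat.card_congr (QuotientGroup.quotientKerEquivOfSurjective π hsurj).toEquiv]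
      simp [Nat.card_eq_fintype_card, Fintype.card_units_int]
    rw [hcardPi, h2] at h1
    obtain ⟨k, rfl⟩ : ∃ k, m = k + 1 := ⟨m - 1, by omega⟩
    rw [pow_succ'] at h1
    simpa using (Nat.eq_of_mul_eq_mul_left (by norm_num) h1).symm
  -- the embedding into SL
  have hdet : ∀ k : ↥K, (Matrix.diagonal (fun i => ((k.1 i : ℤ) : F))).det = 1 := by
    intro k
    rw [Matrix.det_diagonal]
    have h2 : (∏ i, k.1 i) = (1:ℤˣ) := k.2
    have h1 : ∏ i, ((k.1 i : ℤ):F) = (((∏ i, k.1 i : ℤˣ) : ℤ) : F) := by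
      push_cast
      rfl
    rw [h1, h2]
    norm_num
  let ρ : ↥K →* Matrix.SpecialLinearGroup (Fin m) F :=
    { toFun := fun k => ⟨Matrix.diagonal (fun i => ((k.1 i : ℤ) : F)), hdet k⟩
      map_one' := by
        apply Subtype.ext
        show Matrix.diagonal _ = 1
        rw [← Matrix.diagonal_one]
        congr 1
        funext i
        simp
      map_mul' := by
        intro a b
        apply Subtype.ext
        show Matrix.diagonal _ = Matrix.diagonal _ * Matrix.diagonal _
        rw [Matrix.diagonal_mul_diagonal]
        congr 1
        funext i
        push_cast
        simp }
  have hρinj : Function.Injective ρ := by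
    intro a b hab
    have hM : Matrix.diagonal (fun i => ((a.1 i : ℤ) : F))
        = Matrix.diagonal (fun i => ((b.1 i : ℤ) : F)) := congrArg Subtype.val hab
    apply Subtype.ext
    funext i
    have := congrArg (fun M => M i i) hM
    simp only [Matrix.diagonal_apply_eq] at this
    rcases Int.units_eq_one_or (a.1 i) with h1 | h1 <;>
      rcases Int.units_eq_one_or (b.1 i) with h2 | h2 <;>
      rw [h1, h2] at this ⊢ <;>
      first
        | rfl
        | exact absurd (show (1:F) = -1 from by exact_mod_cast this) hone
        | exact absurd (show (1:F) = -1 from by exact_mod_cast this.symm) hone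
  refine ⟨ρ.range, ?_, ?_, ?_⟩
  · rintro x ⟨a, rfl⟩ y ⟨b, rfl⟩
    rw [← map_mul, ← map_mul, mul_comm a b]
  · rintro x ⟨a, rfl⟩
    have ha : a ^ 2 = 1 := by
      apply Subtype.ext
      show (a : Fin m → ℤˣ) ^ 2 = 1
      funext i
      rw [Pi.pow_apply, Int.units_sq]
      rfl
    rw [← map_pow, ha, map_one]
  · rw [Nat.card_congr (MonoidHom.ofInjective hρinj).toEquiv.symm]
    exact hcardK


/-- The 2-rank of `SL_{2n}(F)` over a finite field `F` of odd order `q` equals `2n - 1`. -/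
theorem rank_SL (q n : ℕ) (hn : 1 ≤ n) (F : Type*) [Field F] [Fintype F]
    (hc : Fintype.card F = q) (hq : Odd q) (hpp : IsPrimePow q)
    (P : Sylow 2 (Matrix.SpecialLinearGroup (Fin (2 * n)) F)) :
    pRank 2 ↥(P : Subgroup (Matrix.SpecialLinearGroup (Fin (2 * n)) F)) = 2 * n - 1 := by
  classical
  set G := Matrix.SpecialLinearGroup (Fin (2 * n)) F with hG
  have hm : 1 ≤ 2 * n := by omega
  have htwo : (2:F) ≠ 0 := by
    intro h20
    have hdvd : ringChar F ∣ 2 := ringChar.dvd (by exact_mod_cast h20)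
    have hchar : ringChar F = 2 :=
      ((Nat.dvd_prime Nat.prime_two).mp hdvd).resolve_left CharP.ringChar_ne_one
    haveI : CharP F 2 := hchar ▸ ringChar.charP F
    obtain ⟨k, -, hcard⟩ := FiniteField.card F 2
    rw [hc] at hcard
    have hev : Even q := hcard ▸ (Nat.even_pow.mpr ⟨even_two, k.pos.ne'⟩)
    exact (Nat.not_even_iff_odd.mpr hq) hev
  have key_upper : ∀ k : ℕ,
      (∃ H : Subgroup ↥(P : Subgroup G), IsElementaryAbelian 2 H ∧ Nat.card H = 2^k) →
      k ≤ 2*n - 1 := by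
    rintro k ⟨H, ⟨hcm, hsq⟩, hcard⟩
    set H' := H.map (P : Subgroup G).subtype with hH'
    have hcomm' : ∀ x ∈ H', ∀ y ∈ H', x*y = y*x := by
      rintro x ⟨a, ha, rfl⟩ y ⟨b, hb, rfl⟩
      rw [← map_mul, ← map_mul, hcm a ha b hb]
    have hsq' : ∀ x ∈ H', x^2 = 1 := by
      rintro x ⟨a, ha, rfl⟩
      rw [← map_pow, hsq a ha, map_one]
    have hle := card_le_pow htwo hm H' hcomm' hsq'
    have hcard' : Nat.card H' = 2^k := by
      rw [← hcard]
      exact (Nat.card_congr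
        (Subgroup.equivMapOfInjective H _ (Subgroup.subtype_injective _)).toEquiv).symm
    rw [hcard'] at hle
    exact (Nat.pow_le_pow_iff_right (by norm_num)).mp hle
  have key_lower : ∃ H : Subgroup ↥(P : Subgroup G),
      IsElementaryAbelian 2 H ∧ Nat.card H = 2^(2*n-1) := by
    obtain ⟨D, hDcomm, hDsq, hDcard⟩ := exists_diag (F := F) htwo hm
    have hpD : IsPGroup 2 D := IsPGroup.of_card hDcard
    obtain ⟨Q, hDQ⟩ := hpD.exists_le_sylow
    obtain ⟨g, hg⟩ := MulAction.exists_smul_eq G Q P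
    set D' := Subgroup.map (MulAut.conj g).toMonoidHom D with hD'def
    have hD'P : D' ≤ (P : Subgroup G) := by
      have h1 : D' ≤ Subgroup.map (MulAut.conj g).toMonoidHom (Q : Subgroup G) :=
        Subgroup.map_mono hDQ
      rw [← hg]
      exact h1
    have hD'comm : ∀ x ∈ D', ∀ y ∈ D', x*y = y*x := by
      rintro x ⟨a, ha, rfl⟩ y ⟨b, hb, rfl⟩
      rw [← map_mul, ← map_mul, hDcomm a ha b hb]
    have hD'sq : ∀ x ∈ D', x^2 = 1 := by
      rintro x ⟨a, ha, rfl⟩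
      rw [← map_pow, hDsq a ha, map_one]
    have hD'card : Nat.card D' = 2^(2*n-1) := by
      rw [← hDcard]
      exact (Nat.card_congr
        (Subgroup.equivMapOfInjective D _ (MulAut.conj g).injective).toEquiv).symm
    refine ⟨D'.subgroupOf (P : Subgroup G), ⟨?_, ?_⟩, ?_⟩
    · intro x hx y hy
      apply Subtype.ext
      rw [Subgroup.mem_subgroupOf] at hx hy
      push_cast
      exact hD'comm _ hx _ hy
    · intro x hx
      apply Subtype.ext
      rw [Subgroup.mem_subgroupOf] at hx
      push_cast
      exact hD'sq _ hx
    · rw [Nat.card_congr (Subgroup.subgroupOfEquivOfLe hD'P).toEquiv]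
      exact hD'card
  have hgreat : IsGreatest
      {k | ∃ H : Subgroup ↥(P : Subgroup G), IsElementaryAbelian 2 H ∧ Nat.card H = 2^k}
      (2*n - 1) := ⟨key_lower, fun k hk => key_upper k hk⟩
  have := hgreat.csSup_eq
  rw [pRank]
  convert this using 2
end

section
/- Let p be a prime and Q a finite group, and let W = Q ≀ ℤ/p be the wreath product, i.e. the semidirect product (Fin p → Q) ⋊ ℤ/p in which ℤ/p acts by cyclically shifting the coordinates. Let P denote the base subgroup (Fin p → Q) and let x denote the image in W of the generator 1 of ℤ/p (an element of order p). Then every element of order p in the coset xP is conjugate to x by an element of P. -/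
/-- The homomorphism `ℤ/n → G` sending `1` to an element `g` with `g ^ n = 1`. -/
noncomputable def zmodHom {G : Type*} [Group G] (n : ℕ) (g : G) (h : g ^ n = 1) :
    Multiplicative (ZMod n) →* G :=
  AddMonoidHom.toMultiplicativeLeft
    (ZMod.lift n ⟨zmultiplesHom (Additive G) (Additive.ofMul g), by
      show ((n : ℤ) • Additive.ofMul g) = 0
      rw [← ofMul_zpow, zpow_natCast, h, ofMul_one]⟩)

/-- The automorphism of `ι → Q` induced by a permutation of the index set `ι`. -/
def permMulAut {ι : Type*} {Q : Type*} [Group Q] (σ : Equiv.Perm ι) : MulAut (ι → Q) where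
  toFun f := f ∘ σ.symm
  invFun f := f ∘ σ
  left_inv f := by ext i; simp
  right_inv f := by ext i; simp
  map_mul' f g := rfl

/-- Permutations of the index set act on `ι → Q` by automorphisms. -/
def permHom (ι : Type*) (Q : Type*) [Group Q] : Equiv.Perm ι →* MulAut (ι → Q) where
  toFun := permMulAut
  map_one' := by ext f i; rfl
  map_mul' σ τ := by ext f i; rfl

open Fin.NatCast in
lemma finRotate_pow_self : ∀ p : ℕ, finRotate p ^ p = 1 := by
  intro p
  match p with
  | 0 => exact Subsingleton.elim _ _
  | (n+1) =>
    have key : ∀ k : ℕ, ∀ i : Fin (n+1), (finRotate (n+1) ^ k) i = i + (k : Fin (n+1)) := by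
      intro k
      induction k with
      | zero => intro i; simp
      | succ m ih =>
        intro i
        rw [pow_succ, Equiv.Perm.mul_apply, ih, finRotate_succ_apply]
        push_cast
        abel
    ext i
    rw [key (n+1) i]
    simp

/-- The action of `ℤ/p` on `Fin p → Q` by cyclically shifting the coordinates. -/
noncomputable def rotHom (p : ℕ) (Q : Type*) [Group Q] :
    Multiplicative (ZMod p) →* MulAut (Fin p → Q) :=
  zmodHom p (permHom (Fin p) Q (finRotate p))
    (by rw [← map_pow, finRotate_pow_self, map_one])

/-- The wreath product `Q ≀ ℤ/p = (Fin p → Q) ⋊ ℤ/p`, where `ℤ/p` acts by cyclically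
shifting the coordinates. -/
noncomputable def WreathCyc (p : ℕ) (Q : Type*) [Group Q] :=
  (Fin p → Q) ⋊[rotHom p Q] Multiplicative (ZMod p)

noncomputable instance (p : ℕ) (Q : Type*) [Group Q] : Group (WreathCyc p Q) :=
  inferInstanceAs (Group ((Fin p → Q) ⋊[rotHom p Q] Multiplicative (ZMod p)))

/-- The base subgroup `Q^p` of the wreath product `Q ≀ ℤ/p`. -/
noncomputable def wreathBase (p : ℕ) (Q : Type*) [Group Q] : Subgroup (WreathCyc p Q) :=
  (SemidirectProduct.inl : (Fin p → Q) →* (Fin p → Q) ⋊[rotHom p Q] Multiplicative (ZMod p)).range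

/-- The image in `Q ≀ ℤ/p` of the generator `1` of `ℤ/p`. -/
noncomputable def wreathGen (p : ℕ) (Q : Type*) [Group Q] : WreathCyc p Q :=
  (SemidirectProduct.inr : Multiplicative (ZMod p) →* (Fin p → Q) ⋊[rotHom p Q] Multiplicative (ZMod p))
    (Multiplicative.ofAdd (1 : ZMod p))

open Fin.NatCast Fin.CommRing

lemma sdp_pow_left {N G : Type*} [Group N] [Group G] {φ : G →* MulAut N}
    (x : N ⋊[φ] G) (n : ℕ) :
    (x ^ n).left = ((List.range n).map (fun k => φ (x.right ^ k) x.left)).prod := by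
  induction n with
  | zero => simp [SemidirectProduct.one_left]
  | succ n ih =>
    have hr : (x ^ n).right = x.right ^ n := by
      have := map_pow (SemidirectProduct.rightHom (φ := φ)) x n
      simpa [SemidirectProduct.rightHom_eq_right] using this
    rw [pow_succ, SemidirectProduct.mul_left, ih, hr, List.range_succ, List.map_append,
      List.prod_append]
    simp

lemma list_prod_apply {α ι Q : Type*} [Group Q] (l : List α) (f : α → (ι → Q)) (i : ι) :
    (l.map f).prod i = (l.map (fun a => f a i)).prod := by
  induction l with
  | nil => rfl
  | cons a l ih => simp only [List.map_cons, List.prod_cons, Pi.mul_apply, ih]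

lemma finRotate_pow_apply (n k : ℕ) (i : Fin (n+1)) :
    (finRotate (n+1) ^ k) i = i + (k : Fin (n+1)) := by
  induction k with
  | zero => simp
  | succ m ih =>
    rw [pow_succ', Equiv.Perm.mul_apply, finRotate_succ_apply, ih]
    push_cast
    ring

lemma rotHom_ofAdd_one (p : ℕ) (Q : Type*) [Group Q] :
    rotHom p Q (Multiplicative.ofAdd (1 : ZMod p)) = permHom (Fin p) Q (finRotate p) := by
  have : (1 : ZMod p) = ((1 : ℤ) : ZMod p) := by norm_cast
  show zmodHom p _ _ (Multiplicative.ofAdd (1 : ZMod p)) = _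
  unfold zmodHom
  simp only [AddMonoidHom.coe_toMultiplicativeLeft, Function.comp_apply, toAdd_ofAdd, this, ZMod.lift_coe]
  simp

lemma rotHom_pow_apply (p : ℕ) [NeZero p] (Q : Type*) [Group Q] (k : ℕ) (c : Fin p → Q) (i : Fin p) :
    rotHom p Q (Multiplicative.ofAdd (1 : ZMod p) ^ k) c i = c (i - (k : Fin p)) := by
  obtain ⟨n, rfl⟩ : ∃ n, p = n + 1 := by
    cases p with
    | zero => exact absurd i.2 (by omega)
    | succ n => exact ⟨n, rfl⟩
  rw [map_pow, rotHom_ofAdd_one, ← map_pow]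
  show c ((finRotate (n+1) ^ k).symm i) = _
  congr 1
  rw [Equiv.symm_apply_eq, finRotate_pow_apply]
  ring

/-- In the wreath product `W = Q ≀ ℤ/p` (`p` prime, `Q` finite), with base subgroup
`P = Q^p` and `x` the image of the generator of `ℤ/p`, every element of order `p` in the
coset `xP` is conjugate to `x` by an element of `P`. -/
theorem orderp_in_coset_conj (p : ℕ) (hp : p.Prime) (Q : Type*) [Group Q] [Finite Q]
    (w : WreathCyc p Q) (hw : ∃ a ∈ wreathBase p Q, w = wreathGen p Q * a)
    (hord : orderOf w = p) :
    ∃ g ∈ wreathBase p Q, g * wreathGen p Q * g⁻¹ = w := by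
  haveI : NeZero p := ⟨hp.ne_zero⟩
  obtain ⟨a, ⟨b, rfl⟩, rfl⟩ := hw
  let w' : (Fin p → Q) ⋊[rotHom p Q] Multiplicative (ZMod p) :=
    SemidirectProduct.inr (Multiplicative.ofAdd (1 : ZMod p)) * SemidirectProduct.inl b
  have hpow : w' ^ p = 1 := by
    have h : ∀ u : WreathCyc p Q, orderOf u = p → u ^ p = 1 := fun u hu =>
      orderOf_dvd_iff_pow_eq_one.mp (dvd_of_eq hu)
    exact h _ hord
  set c : Fin p → Q := w'.left with hc
  have hright : w'.right = Multiplicative.ofAdd (1 : ZMod p) := by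
    show (SemidirectProduct.inr (Multiplicative.ofAdd (1 : ZMod p)) *
      SemidirectProduct.inl b).right = _
    rw [SemidirectProduct.mul_right, SemidirectProduct.right_inr,
      SemidirectProduct.right_inl, mul_one]
  set E : ℕ → Q := fun m =>
    ((List.range m).map (fun (j : ℕ) => c ((0 : Fin p) - (j : Fin p)))).prod with hE
  have hstep : ∀ m, E (m + 1) = E m * c ((0 : Fin p) - (m : Fin p)) := by
    intro m
    simp [hE, List.range_succ]
  have hEp : E p = 1 := by
    have h1 : (w' ^ p).left = (1 : Fin p → Q) := by rw [hpow]; rfl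
    have h2 := congrFun h1 (0 : Fin p)
    rw [sdp_pow_left, list_prod_apply] at h2
    simp only [hright, rotHom_pow_apply, Pi.one_apply, ← hc] at h2
    simp only [hE]
    exact h2
  set d : Fin p → Q := fun i => (E ((-i).val))⁻¹ with hd
  refine ⟨SemidirectProduct.inl d, ⟨d, rfl⟩, ?_⟩
  let g : (Fin p → Q) ⋊[rotHom p Q] Multiplicative (ZMod p) := SemidirectProduct.inl d
  let x : (Fin p → Q) ⋊[rotHom p Q] Multiplicative (ZMod p) :=
    SemidirectProduct.inr (Multiplicative.ofAdd (1 : ZMod p))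
  show g * x * g⁻¹ = w'
  have hinv : g⁻¹ = SemidirectProduct.inl d⁻¹ := by
    show (SemidirectProduct.inl d)⁻¹ = _
    rw [← map_inv]
  rw [hinv]
  apply SemidirectProduct.ext
  · -- left components
    simp only [g, x, SemidirectProduct.mul_left, SemidirectProduct.mul_right,
      SemidirectProduct.left_inl, SemidirectProduct.right_inl, SemidirectProduct.left_inr,
      SemidirectProduct.right_inr, map_one, MulAut.one_apply, mul_one, one_mul, ← hc]
    funext i
    have hphi : rotHom p Q (Multiplicative.ofAdd (1 : ZMod p)) d⁻¹ i = (d (i - 1))⁻¹ := by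
      have h5 := rotHom_pow_apply p Q 1 d⁻¹ i
      simp only [pow_one, Nat.cast_one] at h5
      rw [h5]
      rfl
    rw [Pi.mul_apply, hphi]
    set m : ℕ := (-i).val with hm
    have him : ((m : ℕ) : Fin p) = -i := Fin.cast_val_eq_self (-i)
    have hi : i = -((m : ℕ) : Fin p) := by rw [him, neg_neg]
    have hneg : -(i - 1) = ((m : ℕ) : Fin p) + 1 := by rw [him]; ring
    have hmlt : m < p := (-i).isLt
    rcases Nat.lt_or_ge (m + 1) p with hlt | hge
    · have hval : (-(i - 1)).val = m + 1 := by
        rw [hneg, ← Nat.cast_add_one, Fin.val_cast_of_lt hlt]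
      show (E m)⁻¹ * ((E ((-(i - 1)).val))⁻¹)⁻¹ = c i
      rw [hval, inv_inv, hstep m, inv_mul_cancel_left, hi, zero_sub]
    · have hmp : m + 1 = p := by omega
      have hval : (-(i - 1)).val = 0 := by
        rw [hneg, ← Nat.cast_add_one, hmp, Fin.natCast_self]
        rfl
      have h3 := hstep m
      rw [hmp, hEp] at h3
      have h4 : E m * c ((0 : Fin p) - (m : Fin p)) = 1 := h3.symm
      have hcm : c ((0 : Fin p) - (m : Fin p)) = (E m)⁻¹ := eq_inv_of_mul_eq_one_right h4
      rw [zero_sub] at hcm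
      show (E m)⁻¹ * ((E ((-(i - 1)).val))⁻¹)⁻¹ = c i
      rw [hval, hi, hcm]
      have hE0 : E 0 = 1 := rfl
      rw [hE0]
      group
  · -- right components
    simp only [g, x, SemidirectProduct.mul_right, SemidirectProduct.right_inl,
      SemidirectProduct.right_inr]
    show 1 * Multiplicative.ofAdd (1 : ZMod p) * 1 = w'.right
    rw [hright, one_mul, mul_one]
end
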